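/- Let T_1, …, T_t be finite disjoint nonempty sets with |T_j| = n_j, let c ≥ 1, and let s_1, …, s_r be 'shapes', where each s_i assigns to each index j either a natural number s_i(j) ≤ c or the symbol ⊤ (meaning 'more than c'). Suppose for every j: (a) Σ_{i : s_i(j) ≤ c} s_i(j) + Σ_{i : s_i(j) = ⊤} (c+1) ≤ n_j, and (b) Σ_{i : s_i(j) ≤ c} s_i(j) + Σ_{i : s_i(j) = ⊤} n_j ≥ n_j. Then there exists a partition of T_1 ∪ … ∪ T_t into sets X_1, …, X_r such that for every i and j, |X_i ∩ T_j| = s_i(j) whenever s_i(j) ≤ c, and |X_i ∩ T_j| > c whenever s_i(j) = ⊤. -/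

import Mathlib

/-- A finset whose cardinality equals a given sum of sizes can be partitioned
into pieces with exactly those sizes. -/
lemma exists_partition_of_sizes {α : Type*} [DecidableEq α] :
    ∀ {r : ℕ} (S : Finset α) (f : Fin r → ℕ), (∑ i, f i = S.card) →
      ∃ Y : Fin r → Finset α,
        (∀ i, Y i ⊆ S) ∧
        (∀ i i' : Fin r, i ≠ i' → Disjoint (Y i) (Y i')) ∧
        (∀ i, (Y i).card = f i) ∧
        Finset.univ.biUnion Y = S := by
  intro r
  induction r with
  | zero =>
    intro S f h
    simp only [Finset.univ_eq_empty, Finset.sum_empty] at h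
    refine ⟨fun i => ∅, fun i => i.elim0, fun i => i.elim0, fun i => i.elim0, ?_⟩
    simp [Finset.card_eq_zero.mp h.symm]
  | succ r ih =>
    intro S f h
    have hle : f 0 ≤ S.card := by
      rw [← h, Fin.sum_univ_succ]; exact Nat.le_add_right _ _
    obtain ⟨A, hAsub, hAcard⟩ := Finset.exists_subset_card_eq hle
    have hsum : ∑ i : Fin r, f i.succ = (S \ A).card := by
      rw [Finset.card_sdiff_of_subset hAsub, hAcard]
      have := Fin.sum_univ_succ f
      omega
    obtain ⟨Y', hsub', hdisj', hcard', hun'⟩ := ih (S \ A) (fun i => f i.succ) hsum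
    have hsubS : ∀ i, Y' i ⊆ S := fun i =>
      (hsub' i).trans (Finset.sdiff_subset)
    refine ⟨Fin.cases A Y', ?_, ?_, ?_, ?_⟩
    · intro i; induction i using Fin.cases with
      | zero => exact hAsub
      | succ i => exact hsubS i
    · intro i i' hne
      induction i using Fin.cases with
      | zero =>
        induction i' using Fin.cases with
        | zero => exact absurd rfl hne
        | succ i' =>
          exact Finset.disjoint_of_subset_right (hsub' i') Finset.disjoint_sdiff
      | succ i =>
        induction i' using Fin.cases with
        | zero =>
          exact Finset.disjoint_of_subset_left (hsub' i) Finset.sdiff_disjoint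
        | succ i' =>
          exact hdisj' i i' (fun e => hne (by rw [e]))
    · intro i; induction i using Fin.cases with
      | zero => exact hAcard
      | succ i => exact hcard' i
    · ext x
      simp only [Finset.mem_biUnion, Finset.mem_univ, true_and]
      constructor
      · rintro ⟨i, hi⟩
        induction i using Fin.cases with
        | zero => exact hAsub hi
        | succ i => exact hsubS i hi
      · intro hx
        by_cases hxA : x ∈ A
        · exact ⟨0, hxA⟩
        · have : x ∈ S \ A := Finset.mem_sdiff.mpr ⟨hx, hxA⟩
          rw [← hun'] at this
          obtain ⟨i, _, hi⟩ := Finset.mem_biUnion.mp this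
          exact ⟨i.succ, hi⟩

/-- The abstract combinatorial lemma underlying the ILP formulation for MSO
partitioning.  Given disjoint nonempty finite sets `T 1, …, T t` and shapes
`s 1, …, s r` (where `s i j = some m` fixes the intersection size `m ≤ c`, and
`s i j = none` means "more than `c`"), conditions (a) and (b) guarantee the
existence of a partition `X 1, …, X r` of `⋃ T j` realizing all the shapes. -/
theorem shapes_realizable {α : Type*} [DecidableEq α] {t r : ℕ}
    (T : Fin t → Finset α)
    (hdisj : ∀ j j' : Fin t, j ≠ j' → Disjoint (T j) (T j'))
    (hne : ∀ j : Fin t, (T j).Nonempty)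
    (c : ℕ) (hc : 1 ≤ c)
    (s : Fin r → Fin t → Option ℕ)
    (hcap : ∀ (i : Fin r) (j : Fin t) (m : ℕ), s i j = some m → m ≤ c)
    (ha : ∀ j : Fin t, (∑ i, (s i j).getD (c + 1)) ≤ (T j).card)
    (hb : ∀ j : Fin t, (T j).card ≤ ∑ i, (s i j).getD ((T j).card)) :
    ∃ X : Fin r → Finset α,
      (∀ i i' : Fin r, i ≠ i' → Disjoint (X i) (X i')) ∧
      Finset.univ.biUnion X = Finset.univ.biUnion T ∧
      (∀ (i : Fin r) (j : Fin t) (m : ℕ), s i j = some m → (X i ∩ T j).card = m) ∧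
      (∀ (i : Fin r) (j : Fin t), s i j = none → c < (X i ∩ T j).card) := by
  classical
  set base : Fin t → Fin r → ℕ := fun j i => (s i j).getD (c + 1) with hbase
  -- size function
  have key : ∀ j : Fin t, ∃ f : Fin r → ℕ,
      (∑ i, f i = (T j).card) ∧
      (∀ i m, s i j = some m → f i = m) ∧
      (∀ i, s i j = none → c < f i) := by
    intro j
    by_cases hex : ∃ i, s i j = none
    · obtain ⟨i0, hi0⟩ := hex
      refine ⟨fun i => base j i + (if i = i0 then (T j).card - ∑ i', base j i' else 0),
        ?_, ?_, ?_⟩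
      · rw [Finset.sum_add_distrib, Finset.sum_ite_eq' Finset.univ i0]
        simp only [Finset.mem_univ, if_true]
        have h1 := ha j
        have h2 : ∑ i', base j i' = ∑ i', (s i' j).getD (c + 1) := rfl
        omega
      · intro i m hm
        have hne' : i ≠ i0 := by
          intro e; rw [e, hi0] at hm; cases hm
        simp [base, hm, hne']
      · intro i hi
        have hbi : base j i = c + 1 := by simp [base, hi]
        dsimp only
        rw [hbi]
        split <;> omega
    · push_neg at hex
      have heq : ∀ i, (s i j).getD ((T j).card) = base j i := by
        intro i
        cases hsi : s i j with
        | none => exact absurd hsi (hex i)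
        | some m => simp [base, hsi]
      have hb' := hb j
      rw [Finset.sum_congr rfl (fun i _ => heq i)] at hb'
      refine ⟨base j, le_antisymm (ha j) hb', ?_, ?_⟩
      · intro i m hm; simp [base, hm]
      · intro i hi; exact absurd hi (hex i)
  choose f hfsum hfsome hfnone using key
  have part : ∀ j : Fin t, ∃ Y : Fin r → Finset α,
      (∀ i, Y i ⊆ T j) ∧ (∀ i i' : Fin r, i ≠ i' → Disjoint (Y i) (Y i')) ∧
      (∀ i, (Y i).card = f j i) ∧ Finset.univ.biUnion Y = T j :=
    fun j => exists_partition_of_sizes (T j) (f j) (hfsum j)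
  choose Y hYsub hYdisj hYcard hYun using part
  refine ⟨fun i => Finset.univ.biUnion (fun j => Y j i), ?_, ?_, ?_, ?_⟩
  · intro i i' hne'
    rw [Finset.disjoint_biUnion_left]
    intro j _
    rw [Finset.disjoint_biUnion_right]
    intro j' _
    by_cases hjj : j = j'
    · subst hjj; exact hYdisj j i i' hne'
    · exact Finset.disjoint_of_subset_left (hYsub j i)
        (Finset.disjoint_of_subset_right (hYsub j' i') (hdisj j j' hjj))
  · ext x
    simp only [Finset.mem_biUnion, Finset.mem_univ, true_and]
    constructor
    · rintro ⟨i, j, hx⟩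
      exact ⟨j, hYsub j i hx⟩
    · rintro ⟨j, hx⟩
      rw [← hYun j] at hx
      obtain ⟨i, _, hi⟩ := Finset.mem_biUnion.mp hx
      exact ⟨i, j, hi⟩
  all_goals {
    have hinter : ∀ (i : Fin r) (j : Fin t),
        (Finset.univ.biUnion (fun j' => Y j' i)) ∩ T j = Y j i := by
      intro i j
      ext x
      simp only [Finset.mem_inter, Finset.mem_biUnion, Finset.mem_univ, true_and]
      constructor
      · rintro ⟨⟨j', hj'⟩, hxT⟩
        by_cases hjj : j' = j
        · subst hjj; exact hj'
        · exact absurd (Finset.mem_inter.mpr ⟨hYsub j' i hj', hxT⟩)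
            (by rw [Finset.disjoint_iff_inter_eq_empty.mp (hdisj j' j hjj)]; simp)
      · intro hx; exact ⟨⟨j, hx⟩, hYsub j i hx⟩
    first
    | · intro i j m hm; rw [hinter i j, hYcard j i]; exact hfsome j i m hm
    | · intro i j hm; rw [hinter i j, hYcard j i]; exact hfnone j i hm
  }
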